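/- Dominant term controls increments: for f, s, t positive infinite with s ≠ t, we have f∘t − f∘s ∼ τ_f∘t − τ_f∘s, where τ_f is the dominant term of f. -/

import Mathlib

/-- `s ≺ t` relative to the coefficient field `R`. -/
def Prec {T : Type*} [Field T] [LinearOrder T] [IsStrictOrderedRing T] (R : Subfield T) (s t : T) : Prop :=
  ∀ r ∈ R, 0 < r → r * |s| < |t|

/-- `s` is positive infinite: `s > R`. -/
def PosInf {T : Type*} [Field T] [LinearOrder T] [IsStrictOrderedRing T] (R : Subfield T) (s : T) : Prop :=
  ∀ r ∈ R, r < s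

set_option maxHeartbeats 1000000 in
/-- Key auxiliary: the case `s < t` of the main theorem, with an explicit `r`. -/
theorem dtci_key (T : Type*) [Field T] [LinearOrder T] [IsStrictOrderedRing T]
    (R : Subfield T) (d : T → T) (comp : T → T → T) (x : T)
    (hd_add : ∀ a b : T, d (a + b) = d a + d b)
    (hd_mul : ∀ a b : T, d (a * b) = d a * b + a * d b)
    (hd_ker : ∀ a : T, d a = 0 ↔ a ∈ R)
    (hH : ∀ f : T, PosInf R f → 0 < d f)
    (hx : PosInf R x)
    (comp_add : ∀ f g s : T, PosInf R s → comp (f + g) s = comp f s + comp g s)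
    (comp_mul : ∀ f g s : T, PosInf R s → comp (f * g) s = comp f s * comp g s)
    (comp_strictMono_left : ∀ s : T, PosInf R s → StrictMono (fun f => comp f s))
    (comp_id_right : ∀ f : T, comp f x = f)
    (hmono : ∀ f : T, f ∉ (R : Set T) → ∀ s t : T, PosInf R s → PosInf R t →
      s < t → (0 < d f → comp f s < comp f t) ∧ (d f < 0 → comp f t < comp f s))
    (f s t τ : T) (hf : PosInf R f) (hs : PosInf R s) (ht : PosInf R t)
    (hst : s < t) (hτ : Prec R (f - τ) f)
    (r : T) (hrR : r ∈ R) (hrpos : 0 < r) :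
    r * |(comp f t - comp f s) - (comp τ t - comp τ s)| < comp f t - comp f s := by
  -- numeral memberships
  have h2R : (2:T) ∈ R := by
    rw [show (2:T) = 1 + 1 by norm_num]; exact R.add_mem R.one_mem R.one_mem
  have h4R : (4:T) ∈ R := by
    rw [show (4:T) = 2 + 2 by norm_num]; exact R.add_mem h2R h2R
  have h6R : (6:T) ∈ R := by
    rw [show (6:T) = 4 + 2 by norm_num]; exact R.add_mem h4R h2R
  have h8R : (8:T) ∈ R := by
    rw [show (8:T) = 4 + 4 by norm_num]; exact R.add_mem h4R h4R
  -- PosInf basics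
  have hpos : ∀ g : T, PosInf R g → 0 < g := fun g hg => hg 0 R.zero_mem
  have hnm : ∀ g : T, PosInf R g → g ∉ (R : Set T) :=
    fun g hg hmem => lt_irrefl g (hg g (SetLike.mem_coe.mp hmem))
  -- comp basics
  have comp0 : ∀ u : T, PosInf R u → comp 0 u = 0 := by
    intro u hu
    have h := comp_add 0 0 u hu
    rw [add_zero] at h
    linarith
  have compNeg : ∀ a u : T, PosInf R u → comp (-a) u = - comp a u := by
    intro a u hu
    have h := comp_add a (-a) u hu
    rw [add_neg_cancel, comp0 u hu] at h
    linarith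
  have compSub : ∀ a b u : T, PosInf R u → comp (a - b) u = comp a u - comp b u := by
    intro a b u hu
    rw [sub_eq_add_neg, comp_add a (-b) u hu, compNeg b u hu, sub_eq_add_neg]
  have comp1 : ∀ u : T, PosInf R u → comp 1 u = 1 := by
    intro u hu
    have h := comp_mul 1 1 u hu
    rw [one_mul] at h
    have h0 : comp 0 u < comp 1 u := comp_strictMono_left u hu (by norm_num : (0:T) < 1)
    rw [comp0 u hu] at h0
    have h2 : comp 1 u * 1 = comp 1 u * comp 1 u := by rw [mul_one]; exact h
    exact (mul_left_cancel₀ (ne_of_gt h0) h2).symm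
  have comp2 : ∀ u : T, PosInf R u → comp 2 u = 2 := by
    intro u hu
    have h := comp_add 1 1 u hu
    rw [comp1 u hu] at h
    rw [show (2:T) = 1 + 1 by norm_num, h]
  have comp4 : ∀ u : T, PosInf R u → comp 4 u = 4 := by
    intro u hu
    have h := comp_add 2 2 u hu
    rw [comp2 u hu] at h
    rw [show (4:T) = 2 + 2 by norm_num, h]
  have compHalf : ∀ u : T, PosInf R u → comp (1/2 : T) u = 1/2 := by
    intro u hu
    have h := comp_mul 2 (1/2) u hu
    rw [show (2:T) * (1/2) = 1 by norm_num, comp1 u hu, comp2 u hu] at h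
    linarith
  -- increment positivity
  have incr : ∀ g : T, PosInf R g → comp g s < comp g t :=
    fun g hg => (hmono g (hnm g hg) s t hs ht hst).1 (hH g hg)
  have hfpos : 0 < f := hpos f hf
  have hD : 0 < comp f t - comp f s := by have := incr f hf; linarith
  -- the small part w
  obtain ⟨w, hw_def⟩ : ∃ w : T, w = |f - τ| := ⟨_, rfl⟩
  have hw_nonneg : 0 ≤ w := by rw [hw_def]; exact abs_nonneg _
  have hweak : ∀ e : T, e ∈ R → 0 < e → 8 * (e * w) < f := by
    intro e he hep
    have h8e : (8:T) * e ∈ R := R.mul_mem h8R he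
    have h := hτ (8 * e) h8e (by positivity)
    rw [abs_of_pos hfpos] at h
    rw [hw_def]
    linarith [h]
  -- comp w u ≥ 0
  have hWnn : ∀ u : T, PosInf R u → 0 ≤ comp w u := by
    intro u hu
    have h' : comp 0 u ≤ comp w u := (comp_strictMono_left u hu).monotone hw_nonneg
    rw [comp0 u hu] at h'
    exact h'
  -- bounded increment lemma
  have hX : ∀ e : T, e ∈ R → 0 < e →
      |comp e t * comp w t - comp e s * comp w s| < (comp f t - comp f s) / 2 := by
    intro e he hep
    have hewnn : 0 ≤ e * w := mul_nonneg hep.le hw_nonneg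
    have hgm : PosInf R (f * (1/2) - e * w) := by
      intro a ha
      have h4a := hf (4 * a) (R.mul_mem h4R ha)
      have h8 := hweak e he hep
      linarith
    have hgp : PosInf R (f * (1/2) + e * w) := by
      intro a ha
      have h4a := hf (4 * a) (R.mul_mem h4R ha)
      linarith
    have dec1 : ∀ u : T, PosInf R u →
        comp (f * (1/2) - e * w) u = comp f u * (1/2) - comp e u * comp w u := by
      intro u hu
      rw [compSub _ _ u hu, comp_mul f (1/2) u hu, comp_mul e w u hu, compHalf u hu]
    have dec2 : ∀ u : T, PosInf R u →
        comp (f * (1/2) + e * w) u = comp f u * (1/2) + comp e u * comp w u := by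
      intro u hu
      rw [comp_add _ _ u hu, comp_mul f (1/2) u hu, comp_mul e w u hu, compHalf u hu]
    have h1 := incr _ hgm
    have h2 := incr _ hgp
    rw [dec1 s hs, dec1 t ht] at h1
    rw [dec2 s hs, dec2 t ht] at h2
    rw [abs_lt]
    constructor <;> linarith
  -- the gadget: comp c u ∈ [c/2, 3c/2] for constants c ∈ R, c > 0
  have hC : ∀ u : T, PosInf R u → ∀ c : T, c ∈ R → 0 < c →
      c/2 ≤ comp c u ∧ comp c u ≤ 3*c/2 := by
    intro u hu c hc hcpos
    have hf4 : (4:T) < f := hf 4 h4R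
    have hfne : f ≠ 0 := ne_of_gt hfpos
    have hfi : 0 < f⁻¹ := inv_pos.mpr hfpos
    have hfi4 : f⁻¹ < 1/4 := by
      have := one_div_lt_one_div_of_lt (show (0:T) < 4 by norm_num) hf4
      simpa [one_div] using this
    have hIgt' : comp 4 u < comp f u := comp_strictMono_left u hu hf4
    have hIgt : (4:T) < comp f u := by rwa [comp4 u hu] at hIgt'
    have hIpos : 0 < comp f u := by linarith
    have hIne : comp f u ≠ 0 := ne_of_gt hIpos
    have hIi : 0 < (comp f u)⁻¹ := inv_pos.mpr hIpos
    have hIi4 : (comp f u)⁻¹ < 1/4 := by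
      have := one_div_lt_one_div_of_lt (show (0:T) < 4 by norm_num) hIgt
      simpa [one_div] using this
    have compInvf : comp f⁻¹ u = (comp f u)⁻¹ := by
      have h := comp_mul f f⁻¹ u hu
      rw [mul_inv_cancel₀ hfne, comp1 u hu] at h
      exact (inv_eq_of_mul_eq_one_right h.symm).symm
    -- derivative facts
    have hdf : 0 < d f := hH f hf
    have d0 : d 0 = 0 := (hd_ker 0).mpr R.zero_mem
    have d1 : d 1 = 0 := (hd_ker 1).mpr R.one_mem
    have d2 : d 2 = 0 := (hd_ker 2).mpr h2R
    have dc : d c = 0 := (hd_ker c).mpr hc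
    have dneg : ∀ a : T, d (-a) = - d a := by
      intro a
      have h := hd_add a (-a)
      rw [add_neg_cancel, d0] at h
      linarith
    have dInvNeg : d f⁻¹ < 0 := by
      have h1 : d (f * f⁻¹) = 0 := by rw [mul_inv_cancel₀ hfne]; exact d1
      have h2 := hd_mul f f⁻¹
      rw [h1] at h2
      by_contra hcon
      push_neg at hcon
      have e1 : 0 < d f * f⁻¹ := mul_pos hdf hfi
      have e2 : 0 ≤ f * d f⁻¹ := mul_nonneg hfpos.le hcon
      linarith
    have hdic : 0 < (- d f⁻¹) * c := mul_pos (neg_pos.mpr dInvNeg) hcpos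
    have dg2 : 0 < d ((2 - f⁻¹) * c) := by
      rw [hd_mul, dc]
      have hdn2 : d (2 - f⁻¹) = - d f⁻¹ := by
        rw [sub_eq_add_neg, hd_add, d2, dneg]; ring
      rw [hdn2]
      linarith [hdic]
    have dg1 : d ((2 + f⁻¹) * c) < 0 := by
      rw [hd_mul, dc]
      have hdn1 : d (2 + f⁻¹) = d f⁻¹ := by rw [hd_add, d2]; ring
      rw [hdn1]
      linarith [hdic]
    have nm2 : (2 - f⁻¹) * c ∉ (R : Set T) := by
      intro hmem
      have h0 := (hd_ker _).mpr (SetLike.mem_coe.mp hmem)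
      rw [h0] at dg2
      exact lt_irrefl 0 dg2
    have nm1 : (2 + f⁻¹) * c ∉ (R : Set T) := by
      intro hmem
      have h0 := (hd_ker _).mpr (SetLike.mem_coe.mp hmem)
      rw [h0] at dg1
      exact lt_irrefl 0 dg1
    have dec2' : comp ((2 - f⁻¹) * c) u = (2 - (comp f u)⁻¹) * comp c u := by
      rw [comp_mul _ _ u hu, compSub _ _ u hu, comp2 u hu, compInvf]
    have dec1' : comp ((2 + f⁻¹) * c) u = (2 + (comp f u)⁻¹) * comp c u := by
      rw [comp_mul _ _ u hu, comp_add _ _ u hu, comp2 u hu, compInvf]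
    have hcc' : comp 0 u < comp c u := comp_strictMono_left u hu hcpos
    have hcc : 0 < comp c u := by rwa [comp0 u hu] at hcc'
    have e1 : f⁻¹ * c < (1/4) * c := mul_lt_mul_of_pos_right hfi4 hcpos
    have e2 : 0 < (comp f u)⁻¹ * comp c u := mul_pos hIi hcc
    have e3 : (comp f u)⁻¹ * comp c u < (1/4) * comp c u :=
      mul_lt_mul_of_pos_right hIi4 hcc
    have e4 : 0 < f⁻¹ * c := mul_pos hfi hcpos
    rcases lt_trichotomy x u with hxu | hxu | hxu
    · -- x < u
      have H2 := (hmono _ nm2 x u hx hu hxu).1 dg2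
      have H1 := (hmono _ nm1 x u hx hu hxu).2 dg1
      rw [comp_id_right, dec2'] at H2
      rw [comp_id_right, dec1'] at H1
      constructor
      · linarith [H2, e1, e2, hcpos, hcc]
      · linarith [H1, e1, e2, hcpos, hcc]
    · -- x = u
      subst hxu
      rw [comp_id_right]
      constructor <;> linarith
    · -- u < x
      have H2 := (hmono _ nm2 u x hu hx hxu).1 dg2
      have H1 := (hmono _ nm1 u x hu hx hxu).2 dg1
      rw [comp_id_right, dec2'] at H2
      rw [comp_id_right, dec1'] at H1
      constructor
      · linarith [H1, e3, e4, hcc, hcpos]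
      · linarith [H2, e3, e4, hcc, hcpos]
  -- main assembly
  obtain ⟨c, hc_def⟩ : ∃ c : T, c = 6 * (r + 1) := ⟨_, rfl⟩
  have hcR : c ∈ R := by rw [hc_def]; exact R.mul_mem h6R (R.add_mem hrR R.one_mem)
  have hcpos : 0 < c := by rw [hc_def]; linarith
  have hc6 : 6 ≤ c := by rw [hc_def]; linarith
  obtain ⟨A, hA_def⟩ : ∃ A : T, A = comp c s := ⟨_, rfl⟩
  obtain ⟨B, hB_def⟩ : ∃ B : T, B = comp c t := ⟨_, rfl⟩
  obtain ⟨Ws, hWs_def⟩ : ∃ Ws : T, Ws = comp w s := ⟨_, rfl⟩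
  obtain ⟨Wt, hWt_def⟩ : ∃ Wt : T, Wt = comp w t := ⟨_, rfl⟩
  obtain ⟨D, hD_def⟩ : ∃ D : T, D = comp f t - comp f s := ⟨_, rfl⟩
  rw [← hD_def] at hD
  obtain ⟨hA1, hA2⟩ := hC s hs c hcR hcpos
  obtain ⟨hB1, hB2⟩ := hC t ht c hcR hcpos
  rw [← hA_def] at hA1 hA2
  rw [← hB_def] at hB1 hB2
  have hWsnn : 0 ≤ Ws := by rw [hWs_def]; exact hWnn s hs
  have hWtnn : 0 ≤ Wt := by rw [hWt_def]; exact hWnn t ht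
  have hApos : 0 < A := by linarith
  have hBpos : 0 < B := by linarith
  -- the three increments bounds
  have hX1 := hX c hcR hcpos
  have hX3 := hX (c * (c * c)) (R.mul_mem hcR (R.mul_mem hcR hcR)) (by positivity)
  have hX4 := hX (c * (c * (c * c)))
    (R.mul_mem hcR (R.mul_mem hcR (R.mul_mem hcR hcR))) (by positivity)
  have hct3 : comp (c * (c * c)) t = B * (B * B) := by
    rw [comp_mul c (c*c) t ht, comp_mul c c t ht, ← hB_def]
  have hcs3 : comp (c * (c * c)) s = A * (A * A) := by
    rw [comp_mul c (c*c) s hs, comp_mul c c s hs, ← hA_def]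
  have hct4 : comp (c * (c * (c * c))) t = B * (B * (B * B)) := by
    rw [comp_mul c _ t ht, comp_mul c (c*c) t ht, comp_mul c c t ht, ← hB_def]
  have hcs4 : comp (c * (c * (c * c))) s = A * (A * (A * A)) := by
    rw [comp_mul c _ s hs, comp_mul c (c*c) s hs, comp_mul c c s hs, ← hA_def]
  rw [hct3, hcs3, ← hWt_def, ← hWs_def, ← hD_def] at hX3
  rw [hct4, hcs4, ← hWt_def, ← hWs_def, ← hD_def] at hX4
  rw [← hA_def, ← hB_def, ← hWt_def, ← hWs_def, ← hD_def] at hX1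
  obtain ⟨hX1l, hX1u⟩ := abs_lt.mp hX1
  obtain ⟨hX3l, hX3u⟩ := abs_lt.mp hX3
  obtain ⟨hX4l, hX4u⟩ := abs_lt.mp hX4
  -- bound G := (B - A) * Wt
  obtain ⟨G, hG_def⟩ : ∃ G : T, G = (B - A) * Wt := ⟨_, rfl⟩
  have hid4 : B * (B * (B * B)) * Wt - A * (A * (A * A)) * Ws
      - A * (B * (B * B) * Wt - A * (A * A) * Ws) = B * (B * B) * G := by
    rw [hG_def]; ring
  have hADle : A * (D/2) ≤ (3*c/2) * (D/2) :=
    mul_le_mul_of_nonneg_right hA2 (by positivity)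
  have hfin : D/2 + (3*c/2) * (D/2) ≤ c * D := by
    linarith [mul_nonneg hD.le (show (0:T) ≤ c - 2 by linarith)]
  have hBG_up : B * (B * B) * G < c * D := by
    have h1 : A * (-(D/2)) < A * (B * (B * B) * Wt - A * (A * A) * Ws) :=
      mul_lt_mul_of_pos_left hX3l hApos
    linarith [hid4, hX4u, h1, hADle, hfin]
  have hBG_lo : -(c * D) < B * (B * B) * G := by
    have h1 : A * (B * (B * B) * Wt - A * (A * A) * Ws) < A * (D/2) :=
      mul_lt_mul_of_pos_left hX3u hApos
    linarith [hid4, hX4l, h1, hADle, hfin]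
  have hcsq : 36 ≤ c * c := by nlinarith [hc6, mul_le_mul hc6 hc6 (by norm_num : (0:T) ≤ 6) (by linarith : (0:T) ≤ c)]
  have hcube : (c/2) * ((c/2) * (c/2)) ≤ B * (B * B) := by
    have m1 : (c/2) * (c/2) ≤ B * B :=
      mul_le_mul hB1 hB1 (by positivity) hBpos.le
    exact mul_le_mul hB1 m1 (by positivity) hBpos.le
  have hG_up : G ≤ D / 4 := by
    rcases le_or_gt G 0 with h | h
    · linarith
    · have big : (c/2) * ((c/2) * (c/2)) * G ≤ B * (B * B) * G :=
        mul_le_mul_of_nonneg_right hcube h.le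
      have h8 : c * ((c * c) * G - 8 * D) < 0 := by linarith [big, hBG_up]
      have h10 : (c * c) * G - 8 * D < 0 := by
        by_contra hcon
        push_neg at hcon
        have := mul_nonneg hcpos.le hcon
        linarith
      have h11 : 36 * G ≤ (c * c) * G := mul_le_mul_of_nonneg_right hcsq h.le
      linarith
  have hG_lo : -(D / 4) ≤ G := by
    rcases le_or_gt 0 G with h | h
    · linarith
    · have hng : 0 < -G := by linarith
      have big : (c/2) * ((c/2) * (c/2)) * (-G) ≤ B * (B * B) * (-G) :=
        mul_le_mul_of_nonneg_right hcube hng.le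
      have h8 : c * ((c * c) * (-G) - 8 * D) < 0 := by linarith [big, hBG_lo]
      have h10 : (c * c) * (-G) - 8 * D < 0 := by
        by_contra hcon
        push_neg at hcon
        have := mul_nonneg hcpos.le hcon
        linarith
      have h11 : 36 * (-G) ≤ (c * c) * (-G) := mul_le_mul_of_nonneg_right hcsq hng.le
      linarith
  -- conclude for A * (Wt - Ws)
  have hid1 : A * (Wt - Ws) = (B * Wt - A * Ws) - G := by rw [hG_def]; ring
  have hAWu : A * (Wt - Ws) < 3 * D / 4 := by rw [hid1]; linarith
  have hAWl : -(3 * D / 4) < A * (Wt - Ws) := by rw [hid1]; linarith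
  have h3r : 3 * r ≤ A := by
    have : 3 * r ≤ c / 2 := by rw [hc_def]; linarith
    linarith
  -- identify the goal difference with Wt - Ws up to sign
  have hτδ : ∀ u : T, PosInf R u → comp f u = comp τ u + comp (f - τ) u := by
    intro u hu
    have h := comp_add τ (f - τ) u hu
    rw [show τ + (f - τ) = f by ring] at h
    exact h
  have hE : (comp f t - comp f s) - (comp τ t - comp τ s)
      = comp (f - τ) t - comp (f - τ) s := by
    rw [hτδ t ht, hτδ s hs]; ring
  have hEabs : |(comp f t - comp f s) - (comp τ t - comp τ s)| = |Wt - Ws| := by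
    rw [hE]
    rcases le_or_gt 0 (f - τ) with hδ | hδ
    · have hw' : w = f - τ := by rw [hw_def]; exact abs_of_nonneg hδ
      rw [hWt_def, hWs_def, hw']
    · have hw' : w = -(f - τ) := by rw [hw_def]; exact abs_of_neg hδ
      have ht' : comp w t = - comp (f - τ) t := by rw [hw', compNeg _ t ht]
      have hs' : comp w s = - comp (f - τ) s := by rw [hw', compNeg _ s hs]
      rw [hWt_def, hWs_def, ht', hs', show -comp (f-τ) t - -comp (f-τ) s
        = -(comp (f-τ) t - comp (f-τ) s) by ring, abs_neg]
  rw [hEabs, ← hD_def]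
  rcases abs_cases (Wt - Ws) with ⟨heq, hsign⟩ | ⟨heq, hsign⟩
  · rw [heq]
    have h1 : 3 * r * (Wt - Ws) ≤ A * (Wt - Ws) :=
      mul_le_mul_of_nonneg_right h3r hsign
    linarith [h1, hAWu, hD]
  · rw [heq]
    have hsign' : 0 ≤ -(Wt - Ws) := by linarith
    have h1 : 3 * r * (-(Wt - Ws)) ≤ A * (-(Wt - Ws)) :=
      mul_le_mul_of_nonneg_right h3r hsign'
    linarith [h1, hAWl, hD]

/-- the dominant term controls increments: for `f, s, t`
positive infinite with `s ≠ t` and `τ` the dominant term of `f`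
(so `f − τ ≺ f`), we have `f∘t − f∘s ∼ τ∘t − τ∘s`. -/
theorem dominant_term_controls_increments (T : Type*) [Field T] [LinearOrder T] [IsStrictOrderedRing T]
    (R : Subfield T) (d : T → T) (comp : T → T → T) (x : T)
    (hd_add : ∀ a b : T, d (a + b) = d a + d b)
    (hd_mul : ∀ a b : T, d (a * b) = d a * b + a * d b)
    (hd_ker : ∀ a : T, d a = 0 ↔ a ∈ R)
    (hH : ∀ f : T, PosInf R f → 0 < d f)
    (hx : PosInf R x)
    (comp_add : ∀ f g s : T, PosInf R s → comp (f + g) s = comp f s + comp g s)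
    (comp_mul : ∀ f g s : T, PosInf R s → comp (f * g) s = comp f s * comp g s)
    (comp_strictMono_left : ∀ s : T, PosInf R s → StrictMono (fun f => comp f s))
    (comp_id_left : ∀ s : T, PosInf R s → comp x s = s)
    (comp_id_right : ∀ f : T, comp f x = f)
    (hmono : ∀ f : T, f ∉ (R : Set T) → ∀ s t : T, PosInf R s → PosInf R t →
      s < t → (0 < d f → comp f s < comp f t) ∧ (d f < 0 → comp f t < comp f s))
    (f s t τ : T) (hf : PosInf R f) (hs : PosInf R s) (ht : PosInf R t)
    (hst : s ≠ t) (hτ : Prec R (f - τ) f) :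
    Prec R ((comp f t - comp f s) - (comp τ t - comp τ s))
      (comp f t - comp f s) := by
  intro r hrR hrpos
  rcases lt_or_gt_of_ne hst with h | h
  · have key := dtci_key T R d comp x hd_add hd_mul hd_ker hH hx comp_add comp_mul
      comp_strictMono_left comp_id_right hmono f s t τ hf hs ht h hτ r hrR hrpos
    exact lt_of_lt_of_le key (le_abs_self _)
  · have key := dtci_key T R d comp x hd_add hd_mul hd_ker hH hx comp_add comp_mul
      comp_strictMono_left comp_id_right hmono f t s τ hf ht hs h hτ r hrR hrpos
    have h1 : (comp f t - comp f s) - (comp τ t - comp τ s)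
        = -((comp f s - comp f t) - (comp τ s - comp τ t)) := by ring
    have h2 : |comp f t - comp f s| = |comp f s - comp f t| := abs_sub_comm _ _
    rw [h1, abs_neg, h2]
    exact lt_of_lt_of_le key (le_abs_self _)
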